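/- Under the block Arnoldi relations and the projected Galerkin equation as in the standard Krylov subspace method for the Sylvester equation (with orthonormal bases U_m, V_m, U_{m+1}* U_m = 0, V_{m+1}* V_m = 0, and U_{m+1}* U_{m+1} = V_{m+1}* V_{m+1} = I), the residual R = A X̃ + X̃ B + C D* of X̃ = U_m Y V_m* has Frobenius norm satisfying ‖R‖_F² = ‖H_{m+1,m} E_m* Y‖_F² + ‖Y E_m G_{m+1,m}*‖_F². -/

import Mathlib

open Matrix
open scoped ComplexOrder

noncomputable def frobNorm {m n : Type*} [Fintype m] [Fintype n] (M : Matrix m n ℂ) : ℝ :=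
  Real.sqrt (∑ i, ∑ j, ‖M i j‖ ^ 2)

/-- The block matrix `E_m = e_m ⊗ I_s`. -/
noncomputable def Em (m s : ℕ) : Matrix (Fin m × Fin s) (Fin s) ℂ :=
  fun p j => if p.1.val = m - 1 ∧ p.2 = j then 1 else 0

lemma frobNorm_sq_eq_trace {a b : Type*} [Fintype a] [Fintype b] (M : Matrix a b ℂ) :
    frobNorm M ^ 2 = (Matrix.trace (Mᴴ * M)).re := by
  rw [frobNorm, Real.sq_sqrt (by positivity)]
  have key : ∀ z : ℂ, (star z * z).re = ‖z‖ ^ 2 := by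
    intro z
    rw [Complex.sq_norm, Complex.normSq_apply, Complex.star_def,
      Complex.mul_re]
    simp
  simp only [Matrix.trace, Matrix.diag, Matrix.mul_apply, Matrix.conjTranspose_apply,
    Complex.re_sum, key]
  exact Finset.sum_comm

/-- Cheap Frobenius-norm residual formula for the Galerkin approximation from block Arnoldi:
`‖R‖_F² = ‖H_{m+1,m} E_m* Y‖_F² + ‖Y E_m G_{m+1,m}*‖_F²`. -/
theorem sylvester_residual_frobenius_norm {n m s : ℕ} (hm : 0 < m)
    (Um Vm : Matrix (Fin n) (Fin m × Fin s) ℂ)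
    (U1 V1 : Matrix (Fin n) (Fin s) ℂ)
    (Y : Matrix (Fin m × Fin s) (Fin m × Fin s) ℂ)
    (H1 G1 : Matrix (Fin s) (Fin s) ℂ)
    (R : Matrix (Fin n) (Fin n) ℂ)
    (hUm : Umᴴ * Um = 1) (hVm : Vmᴴ * Vm = 1)
    (hU1 : U1ᴴ * U1 = 1) (hV1 : V1ᴴ * V1 = 1)
    (hUorth : U1ᴴ * Um = 0) (hVorth : V1ᴴ * Vm = 0)
    (hR : R = U1 * H1 * (Em m s)ᴴ * Y * Vmᴴ + Um * Y * (Em m s) * G1ᴴ * V1ᴴ) :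
    frobNorm R ^ 2
      = frobNorm (H1 * (Em m s)ᴴ * Y) ^ 2 + frobNorm (Y * (Em m s) * G1ᴴ) ^ 2 := by
  set P : Matrix (Fin s) (Fin m × Fin s) ℂ := H1 * (Em m s)ᴴ * Y with hP
  set Q : Matrix (Fin m × Fin s) (Fin s) ℂ := Y * (Em m s) * G1ᴴ with hQ
  have hUorth' : Umᴴ * U1 = 0 := by
    have := congrArg Matrix.conjTranspose hUorth
    simpa using this
  have hR' : R = U1 * P * Vmᴴ + Um * Q * V1ᴴ := by
    rw [hR, hP, hQ]; simp [Matrix.mul_assoc]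
  have hRR : Rᴴ * R = Vm * (Pᴴ * P) * Vmᴴ + V1 * (Qᴴ * Q) * V1ᴴ := by
    rw [hR']
    have e1 : (U1 * P * Vmᴴ)ᴴ * (U1 * P * Vmᴴ) = Vm * (Pᴴ * P) * Vmᴴ := by
      simp only [conjTranspose_mul, conjTranspose_conjTranspose, Matrix.mul_assoc]
      rw [← Matrix.mul_assoc U1ᴴ U1, hU1, Matrix.one_mul]
    have e2 : (U1 * P * Vmᴴ)ᴴ * (Um * Q * V1ᴴ) = 0 := by
      simp only [conjTranspose_mul, conjTranspose_conjTranspose, Matrix.mul_assoc]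
      rw [← Matrix.mul_assoc U1ᴴ Um, hUorth]
      simp
    have e3 : (Um * Q * V1ᴴ)ᴴ * (U1 * P * Vmᴴ) = 0 := by
      simp only [conjTranspose_mul, conjTranspose_conjTranspose, Matrix.mul_assoc]
      rw [← Matrix.mul_assoc Umᴴ U1, hUorth']
      simp
    have e4 : (Um * Q * V1ᴴ)ᴴ * (Um * Q * V1ᴴ) = V1 * (Qᴴ * Q) * V1ᴴ := by
      simp only [conjTranspose_mul, conjTranspose_conjTranspose, Matrix.mul_assoc]
      rw [← Matrix.mul_assoc Umᴴ Um, hUm, Matrix.one_mul]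
    rw [conjTranspose_add, Matrix.add_mul, Matrix.mul_add, Matrix.mul_add, e1, e2, e3, e4]
    simp [Matrix.mul_assoc]
  have t1 : Matrix.trace (Vm * (Pᴴ * P) * Vmᴴ) = Matrix.trace (Pᴴ * P) := by
    rw [Matrix.trace_mul_comm, ← Matrix.mul_assoc, hVm, Matrix.one_mul]
  have t2 : Matrix.trace (V1 * (Qᴴ * Q) * V1ᴴ) = Matrix.trace (Qᴴ * Q) := by
    rw [Matrix.trace_mul_comm, ← Matrix.mul_assoc, hV1, Matrix.one_mul]
  rw [frobNorm_sq_eq_trace, frobNorm_sq_eq_trace, frobNorm_sq_eq_trace, hRR,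
    Matrix.trace_add, t1, t2, Complex.add_re]
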